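/- For a non-degenerate 1-simplex (line segment) with endpoints x_1, x_2 ∈ ℝ^d and density ρ, the line integral ∫ ρ e^{-i k·x} ds over the segment equals ρ · i · |x_2 - x_1| · (e^{-iσ_1}/(σ_1 - σ_2) + e^{-iσ_2}/(σ_2 - σ_1)), where σ_t = k · x_t, provided σ_1 ≠ σ_2. -/

import Mathlib

/-- NUFT of a constant density over a non-degenerate line segment: parameterizing the
segment `x(s) = (1-s)x₁ + s x₂`, the line integral `∫ ρ e^{-i k·x} ds` (arc-length)
equals `ρ i ‖x₂ - x₁‖ (e^{-iσ₁}/(σ₁-σ₂) + e^{-iσ₂}/(σ₂-σ₁))` where `σ_t = k·x_t`. -/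
theorem nuft_segment (d : ℕ) (x₁ x₂ k : EuclideanSpace ℝ (Fin d)) (ρ : ℝ)
    (hx : x₁ ≠ x₂)
    (hσ : (inner ℝ k x₁ : ℝ) ≠ (inner ℝ k x₂ : ℝ)) :
    (∫ s in (0:ℝ)..1,
        (ρ : ℂ) * Complex.exp (-Complex.I *
          (((inner ℝ k ((1 - s) • x₁ + s • x₂) : ℝ)) : ℂ)) * (‖x₂ - x₁‖ : ℂ)) =
      (ρ : ℂ) * Complex.I * (‖x₂ - x₁‖ : ℂ) *
        (Complex.exp (-Complex.I * ((inner ℝ k x₁ : ℝ) : ℂ)) /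
            (((inner ℝ k x₁ : ℝ) : ℂ) - ((inner ℝ k x₂ : ℝ) : ℂ)) +
          Complex.exp (-Complex.I * ((inner ℝ k x₂ : ℝ) : ℂ)) /
            (((inner ℝ k x₂ : ℝ) : ℂ) - ((inner ℝ k x₁ : ℝ) : ℂ))) := by
  set σ₁ : ℝ := inner ℝ k x₁ with hσ1
  set σ₂ : ℝ := inner ℝ k x₂ with hσ2
  have key : ∀ s : ℝ, (inner ℝ k ((1 - s) • x₁ + s • x₂) : ℝ) = σ₁ + s * (σ₂ - σ₁) := by
    intro s
    simp only [inner_add_right, real_inner_smul_right, hσ1, hσ2]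
    ring
  have hc : (-Complex.I * ((σ₂ : ℂ) - σ₁)) ≠ 0 := by
    apply mul_ne_zero
    · simpa using Complex.I_ne_zero
    · rw [sub_ne_zero]
      exact_mod_cast fun h => hσ (by exact_mod_cast h.symm)
  have step : ∀ s : ℝ,
      (ρ : ℂ) * Complex.exp (-Complex.I *
          (((inner ℝ k ((1 - s) • x₁ + s • x₂) : ℝ)) : ℂ)) * (‖x₂ - x₁‖ : ℂ) =
      ((ρ : ℂ) * (‖x₂ - x₁‖ : ℂ) * Complex.exp (-Complex.I * σ₁)) *
        Complex.exp ((-Complex.I * ((σ₂ : ℂ) - σ₁)) * s) := by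
    intro s
    rw [key s]
    push_cast
    rw [show -Complex.I * ((σ₁ : ℂ) + (s : ℂ) * ((σ₂ : ℂ) - σ₁))
        = -Complex.I * (σ₁ : ℂ) + (-Complex.I * ((σ₂ : ℂ) - σ₁)) * (s : ℂ) from by ring,
      Complex.exp_add]
    ring
  simp_rw [step]
  rw [intervalIntegral.integral_const_mul, integral_exp_mul_complex hc]
  have hd : ((σ₁ : ℂ) - σ₂) ≠ 0 := by
    rw [sub_ne_zero]; exact_mod_cast hσ
  have hd' : ((σ₂ : ℂ) - σ₁) ≠ 0 := by
    rw [sub_ne_zero] at hd ⊢; exact fun h => hd h.symm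
  simp only [Complex.ofReal_one, Complex.ofReal_zero, mul_one, mul_zero, Complex.exp_zero]
  field_simp
  have hE : Complex.exp (-(Complex.I * (σ₁ : ℂ))) * Complex.exp (-(Complex.I * ((σ₂ : ℂ) - σ₁)))
      = Complex.exp (-(Complex.I * (σ₂ : ℂ))) := by
    rw [← Complex.exp_add]; ring_nf
  linear_combination (-(ρ : ℂ) * (‖x₂ - x₁‖ : ℂ) * ((σ₁ : ℂ) - σ₂)) * hE +
    (-(ρ : ℂ) * (‖x₂ - x₁‖ : ℂ) *
      (Complex.exp (-(Complex.I * (σ₁ : ℂ))) * ((σ₂ : ℂ) - σ₁) +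
        ((σ₁ : ℂ) - σ₂) * Complex.exp (-(Complex.I * (σ₂ : ℂ))))) *
      Complex.I_sq
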